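/- Suppose $\hat{A}: X \to GL(d,\mathbb{K})$ and $d(\hat{\sigma}^n \hat{y}, \hat{\sigma}^n \hat{z}) \leq e^{-\frac{\chi}{2} n}\, d(\hat{y},\hat{z})$ for $\hat{z} \in W^s_{loc}(\hat{y})$, and the fiber-bunching estimate $\|\hat{A}^n(\hat{x})\| \|\hat{A}^n(\hat{x})^{-1}\| e^{-\frac{\chi}{2} n \alpha} \leq C\theta^n$ holds with $\theta \in (0,1)$ and $\hat{A}$ is $\alpha$-Hölder with constant $K$. Then the sequence $H_n := \hat{A}^n(\hat{z})^{-1}\hat{A}^n(\hat{y})$ satisfies $\|H_{n+1} - H_n\| \leq K' \theta^n d(\hat{y},\hat{z})^{\alpha}$ for some constant $K'$ depending only on $C$, $K$, and $\sup\|\hat{A}^{\pm 1}\|$, and hence $H_n$ converges; the limit $H^s_{\hat{y}\hat{z}} := \lim_{n\to\infty} \hat{A}^n(\hat{z})^{-1}\hat{A}^n(\hat{y})$ satisfies $\|H^s_{\hat{y}\hat{z}} - \mathrm{Id}\| \leq L\, d(\hat{y},\hat{z})^{\alpha}$ with $L = K'/(1-\theta)$. -/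
import Mathlib

open Filter

/-- Forward cocycle iterates `A^n(x) = A(σ^{n-1}x) ⋯ A(σ x) A(x)` for `n : ℕ`. -/
def cocycleNat {X G : Type*} [Monoid G] (σ : X → X) (A : X → G) : ℕ → X → G
  | 0, _ => 1
  | n + 1, x => A (σ^[n] x) * cocycleNat σ A n x

/-- Construction of stable holonomies for fiber-bunched Hölder cocycles: for a pair
`y, z` exponentially contracted under `σ`, the sequence `H_n = Â^n(z)^{-1} Â^n(y)` is
Cauchy with `‖H_{n+1} - H_n‖ ≤ K' θ^n d(y,z)^α` for some constant `K'` (depending only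
on the fiber-bunching constant, the Hölder constant and the uniform bounds on `Â^{±1}`),
hence converges, and the limit `H^s_{yz}` satisfies
`‖H^s_{yz} - Id‖ ≤ K'/(1-θ) · d(y,z)^α`. -/
theorem stable_holonomy_exists {X : Type*} [MetricSpace X] {d : ℕ}
    (σ : X → X)
    (A : X → (EuclideanSpace ℂ (Fin d) →L[ℂ] EuclideanSpace ℂ (Fin d))ˣ)
    (χ α θ C K Msup : ℝ) (hχ : 0 < χ) (hα0 : 0 < α) (hα1 : α ≤ 1)
    (hθ0 : 0 < θ) (hθ1 : θ < 1) (hC : 0 < C) (hK : 0 < K) (hM : 0 < Msup)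
    (hbound : ∀ x : X, ‖(A x).val‖ ≤ Msup ∧ ‖((A x)⁻¹).val‖ ≤ Msup)
    (hHolder : ∀ a b : X, ‖(A a).val - (A b).val‖ ≤ K * dist a b ^ α)
    (hfb : ∀ (x : X) (n : ℕ),
      ‖(cocycleNat σ A n x).val‖ * ‖((cocycleNat σ A n x)⁻¹).val‖ *
        Real.exp (-(χ / 2) * n * α) ≤ C * θ ^ n)
    (y z : X)
    (hcontr : ∀ n : ℕ, dist (σ^[n] y) (σ^[n] z) ≤ Real.exp (-(χ / 2) * n) * dist y z) :
    ∃ K' : ℝ, 0 < K' ∧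
      (∀ n : ℕ,
        ‖(((cocycleNat σ A (n + 1) z)⁻¹ * cocycleNat σ A (n + 1) y).val
          - ((cocycleNat σ A n z)⁻¹ * cocycleNat σ A n y).val)‖
          ≤ K' * θ ^ n * dist y z ^ α) ∧
      ∃ Hs : EuclideanSpace ℂ (Fin d) →L[ℂ] EuclideanSpace ℂ (Fin d),
        Tendsto (fun n : ℕ => ((cocycleNat σ A n z)⁻¹ * cocycleNat σ A n y).val)
          atTop (nhds Hs) ∧
        ‖Hs - 1‖ ≤ K' / (1 - θ) * dist y z ^ α := by
  set f : ℕ → (EuclideanSpace ℂ (Fin d) →L[ℂ] EuclideanSpace ℂ (Fin d)) :=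
    fun n => ((cocycleNat σ A n z)⁻¹ * cocycleNat σ A n y).val with hf
  set Dα : ℝ := dist y z ^ α with hDα
  have hDα0 : 0 ≤ Dα := Real.rpow_nonneg dist_nonneg α
  set c : ℝ := C * Msup * K with hc
  have hc0 : 0 < c := by positivity
  set M : ℝ := Real.exp (c * Dα / (1 - θ)) with hMdef
  have hM0 : 0 < M := Real.exp_pos _
  -- step bound
  have hdiff : ∀ n : ℕ, ‖f (n + 1) - f n‖ ≤ c * θ ^ n * Dα * ‖f n‖ := by
    intro n
    set Bz := cocycleNat σ A n z
    set By := cocycleNat σ A n y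
    set a := A (σ^[n] z)
    set b := A (σ^[n] y)
    have hkey : f (n + 1) - f n
        = (Bz⁻¹).val * ((a⁻¹).val * ((b.val - a.val) * By.val)) := by
      have h1 : f (n + 1) = (Bz⁻¹).val * ((a⁻¹).val * (b.val * By.val)) := by
        show (((a * Bz)⁻¹ * (b * By)).val) = _
        simp [mul_inv_rev, Units.val_mul, mul_assoc]
      have h2 : f n = (Bz⁻¹).val * By.val := by
        show ((Bz⁻¹ * By).val) = _
        simp [Units.val_mul]
      have h3 : (a⁻¹).val * (a.val * By.val) = By.val := by
        rw [← mul_assoc]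
        simp
      rw [h1, h2, sub_mul, mul_sub, h3, mul_sub]
    have hBy : ‖By.val‖ ≤ ‖Bz.val‖ * ‖f n‖ := by
      have : By.val = Bz.val * f n := by
        show By.val = Bz.val * ((Bz⁻¹ * By).val)
        simp [Units.val_mul, ← mul_assoc]
      rw [this]; exact norm_mul_le _ _
    have hba : ‖b.val - a.val‖ ≤ K * (Real.exp (-(χ / 2) * n * α) * Dα) := by
      have h1 := hHolder (σ^[n] y) (σ^[n] z)
      have h2 : dist (σ^[n] y) (σ^[n] z) ^ α
          ≤ (Real.exp (-(χ / 2) * n) * dist y z) ^ α :=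
        Real.rpow_le_rpow dist_nonneg (hcontr n) hα0.le
      have h3 : (Real.exp (-(χ / 2) * n) * dist y z) ^ α
          = Real.exp (-(χ / 2) * n * α) * Dα := by
        rw [Real.mul_rpow (Real.exp_pos _).le dist_nonneg, ← Real.exp_mul]
      calc ‖b.val - a.val‖ ≤ K * dist (σ^[n] y) (σ^[n] z) ^ α := h1
        _ ≤ K * (Real.exp (-(χ / 2) * n * α) * Dα) := by
            rw [← h3]; exact mul_le_mul_of_nonneg_left h2 hK.le
    calc ‖f (n + 1) - f n‖
        ≤ ‖(Bz⁻¹).val‖ * (‖(a⁻¹).val‖ * (‖b.val - a.val‖ * ‖By.val‖)) := by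
          rw [hkey]
          calc ‖(Bz⁻¹).val * ((a⁻¹).val * ((b.val - a.val) * By.val))‖
              ≤ ‖(Bz⁻¹).val‖ * ‖(a⁻¹).val * ((b.val - a.val) * By.val)‖ :=
                norm_mul_le _ _
            _ ≤ ‖(Bz⁻¹).val‖ * (‖(a⁻¹).val‖ * ‖(b.val - a.val) * By.val‖) :=
                mul_le_mul_of_nonneg_left (norm_mul_le _ _) (norm_nonneg _)
            _ ≤ _ :=
                mul_le_mul_of_nonneg_left
                  (mul_le_mul_of_nonneg_left (norm_mul_le _ _) (norm_nonneg _))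
                  (norm_nonneg _)
      _ ≤ ‖(Bz⁻¹).val‖ * (Msup * ((K * (Real.exp (-(χ / 2) * n * α) * Dα)) *
            (‖Bz.val‖ * ‖f n‖))) := by
          apply mul_le_mul_of_nonneg_left _ (norm_nonneg _)
          apply mul_le_mul (hbound _).2 _ (by positivity) hM.le
          exact mul_le_mul hba hBy (norm_nonneg _) (by positivity)
      _ = (‖Bz.val‖ * ‖(Bz⁻¹).val‖ * Real.exp (-(χ / 2) * n * α)) *
            (Msup * K * Dα * ‖f n‖) := by ring
      _ ≤ (C * θ ^ n) * (Msup * K * Dα * ‖f n‖) := by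
          apply mul_le_mul_of_nonneg_right (hfb z n)
          positivity
      _ = c * θ ^ n * Dα * ‖f n‖ := by rw [hc]; ring
  -- geometric sum bound
  have hgeom : ∀ n : ℕ, (∑ i ∈ Finset.range n, θ ^ i) ≤ 1 / (1 - θ) := by
    intro n
    have hs : Summable (fun i : ℕ => θ ^ i) :=
      summable_geometric_of_lt_one hθ0.le hθ1
    have := Summable.sum_le_tsum (Finset.range n) (fun i _ => (pow_nonneg hθ0.le i)) hs
    rwa [tsum_geometric_of_lt_one hθ0.le hθ1, inv_eq_one_div] at this
  -- uniform bound on ‖f n‖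
  have hfle : ∀ n : ℕ, ‖f n‖ ≤ Real.exp (c * Dα * ∑ i ∈ Finset.range n, θ ^ i) := by
    intro n
    induction n with
    | zero =>
        simp only [Finset.range_zero, Finset.sum_empty, mul_zero, Real.exp_zero]
        show ‖((1 : _ˣ)⁻¹ * (1 : _ˣ)).val‖ ≤ 1
        simp only [inv_one, one_mul, Units.val_one]
        exact ContinuousLinearMap.norm_id_le
    | succ n ih =>
        have h1 : ‖f (n + 1)‖ ≤ ‖f n‖ + c * θ ^ n * Dα * ‖f n‖ := by
          calc ‖f (n + 1)‖ = ‖f n + (f (n + 1) - f n)‖ := by congr 1; abel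
            _ ≤ ‖f n‖ + ‖f (n + 1) - f n‖ := norm_add_le _ _
            _ ≤ _ := by gcongr; exact hdiff n
        have h2 : ‖f n‖ + c * θ ^ n * Dα * ‖f n‖
            = (1 + c * Dα * θ ^ n) * ‖f n‖ := by ring
        have h3 : (1 + c * Dα * θ ^ n) ≤ Real.exp (c * Dα * θ ^ n) := by
          have := Real.add_one_le_exp (c * Dα * θ ^ n)
          linarith
        calc ‖f (n + 1)‖ ≤ (1 + c * Dα * θ ^ n) * ‖f n‖ := by rw [← h2]; exact h1
          _ ≤ Real.exp (c * Dα * θ ^ n) *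
              Real.exp (c * Dα * ∑ i ∈ Finset.range n, θ ^ i) := by
              apply mul_le_mul h3 ih (norm_nonneg _)
              positivity
          _ = Real.exp (c * Dα * ∑ i ∈ Finset.range (n + 1), θ ^ i) := by
              rw [← Real.exp_add, Finset.sum_range_succ]
              congr 1
              ring
  have hfM : ∀ n : ℕ, ‖f n‖ ≤ M := by
    intro n
    refine (hfle n).trans ?_
    rw [hMdef]
    apply Real.exp_le_exp.2
    rw [div_eq_mul_one_div]
    exact mul_le_mul_of_nonneg_left (hgeom n) (by positivity)
  refine ⟨c * M, by positivity, ?_, ?_⟩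
  · intro n
    calc ‖f (n + 1) - f n‖ ≤ c * θ ^ n * Dα * ‖f n‖ := hdiff n
      _ ≤ c * θ ^ n * Dα * M := by
          apply mul_le_mul_of_nonneg_left (hfM n); positivity
      _ = c * M * θ ^ n * Dα := by ring
  · have hdist : ∀ n : ℕ, dist (f n) (f (n + 1)) ≤ (c * M * Dα) * θ ^ n := by
      intro n
      rw [dist_eq_norm, norm_sub_rev]
      calc ‖f (n + 1) - f n‖ ≤ c * θ ^ n * Dα * ‖f n‖ := hdiff n
        _ ≤ c * θ ^ n * Dα * M := by
            apply mul_le_mul_of_nonneg_left (hfM n); positivity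
        _ = (c * M * Dα) * θ ^ n := by ring
    have hcauchy : CauchySeq f := cauchySeq_of_le_geometric θ (c * M * Dα) hθ1 hdist
    obtain ⟨Hs, hHs⟩ := cauchySeq_tendsto_of_complete hcauchy
    refine ⟨Hs, hHs, ?_⟩
    have := dist_le_of_le_geometric_of_tendsto₀ θ (c * M * Dα) hθ1 hdist hHs
    have hf0 : f 0 = 1 := by simp [hf, cocycleNat]
    rw [hf0] at this
    calc ‖Hs - 1‖ = dist (1 : _) Hs := by rw [dist_eq_norm, norm_sub_rev]
      _ ≤ (c * M * Dα) / (1 - θ) := this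
      _ = c * M / (1 - θ) * Dα := by ring
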